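/- For any graph G with no isolated vertex, of order n and maximum degree Δ: ⌈2n/Δ⌉ ≤ γ_{(2,2,2)}(G) ≤ 2γ_t(G). Moreover, if G has minimum degree δ ≥ 2, then γ_{(2,2,2)}(G) ≤ γ_{×2,t}(G). -/

import Mathlib

open scoped Classical
open Finset SimpleGraph

/-- A `w`-dominating function: `f : V → {0,…,l}` with `f(N(v)) ≥ w_{f(v)}` for all `v`. -/
def WDom {V : Type*} [Fintype V] (G : SimpleGraph V) {l : ℕ} (w : Fin (l+1) → ℕ)
    (f : V → Fin (l+1)) : Prop :=
  ∀ v, w (f v) ≤ ∑ u, if G.Adj v u then (f u : ℕ) else 0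

/-- The `w`-domination number. -/
noncomputable def gammaW {V : Type*} [Fintype V] (G : SimpleGraph V) {l : ℕ}
    (w : Fin (l+1) → ℕ) : ℕ :=
  sInf {n | ∃ f : V → Fin (l+1), WDom G w f ∧ ∑ v, (f v : ℕ) = n}

/-- The Italian domination number `γ_I = γ_{(2,0,0)}`. -/
noncomputable def gammaI {V : Type*} [Fintype V] (G : SimpleGraph V) : ℕ :=
  gammaW G ![2,0,0]

/-- The domination number. -/
noncomputable def gamma {V : Type*} [Fintype V] (G : SimpleGraph V) : ℕ :=
  sInf {n | ∃ S : Finset V, (∀ v, v ∈ S ∨ ∃ u ∈ S, G.Adj u v) ∧ S.card = n}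

/-- The total domination number. -/
noncomputable def gammaT {V : Type*} [Fintype V] (G : SimpleGraph V) : ℕ :=
  sInf {n | ∃ S : Finset V, (∀ v, ∃ u ∈ S, G.Adj u v) ∧ S.card = n}

/-- The 2-domination number. -/
noncomputable def gamma2 {V : Type*} [Fintype V] (G : SimpleGraph V) : ℕ :=
  sInf {n | ∃ S : Finset V, (∀ v ∉ S, 2 ≤ (S.filter (fun u => G.Adj u v)).card) ∧ S.card = n}

/-- The double domination number. -/
noncomputable def gammaX2 {V : Type*} [Fintype V] (G : SimpleGraph V) : ℕ :=
  sInf {n | ∃ S : Finset V, (∀ v, 2 ≤ (S.filter (fun u => u = v ∨ G.Adj u v)).card) ∧ S.card = n}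

/-- The double total domination number. -/
noncomputable def gammaX2T {V : Type*} [Fintype V] (G : SimpleGraph V) : ℕ :=
  sInf {n | ∃ S : Finset V, (∀ v, 2 ≤ (S.filter (fun u => G.Adj u v)).card) ∧ S.card = n}

/-- The lexicographic product `G ∘ H`. -/
def lexProd {V W : Type*} (G : SimpleGraph V) (H : SimpleGraph W) : SimpleGraph (V × W) where
  Adj x y := G.Adj x.1 y.1 ∨ (x.1 = y.1 ∧ H.Adj x.2 y.2)
  symm := by
    constructor
    rintro x y (h | ⟨h1, h2⟩)
    · exact Or.inl h.symm
    · exact Or.inr ⟨h1.symm, h2.symm⟩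
  loopless := by
    constructor
    rintro x (h | ⟨_, h⟩)
    · exact G.loopless.1 _ h
    · exact H.loopless.1 _ h

lemma hw222 : ∀ i : Fin 3, (![2,2,2] : Fin 3 → ℕ) i = 2 := by decide

lemma filter_adj_card {V : Type*} [Fintype V] (G : SimpleGraph V) (u : V) :
    (univ.filter (fun v => G.Adj v u)).card = G.degree u := by
  rw [← card_neighborFinset_eq_degree]
  congr 1
  ext v
  simp [G.adj_comm]

theorem gammaW222_bounds {V : Type*} [Fintype V] (G : SimpleGraph V)
    (hG : ∀ v, ∃ u, G.Adj v u) :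
    (⌈(2 * (Fintype.card V : ℚ)) / (G.maxDegree : ℚ)⌉ ≤ (gammaW G ![2,2,2] : ℤ) ∧
      gammaW G ![2,2,2] ≤ 2 * gammaT G) ∧
    (2 ≤ G.minDegree → gammaW G ![2,2,2] ≤ gammaX2T G) := by
  classical
  have hWne : {n | ∃ f : V → Fin 3, WDom G ![2,2,2] f ∧ ∑ v, (f v : ℕ) = n}.Nonempty := by
    refine ⟨∑ v : V, ((2 : Fin 3) : ℕ), fun _ => (2 : Fin 3), ?_, rfl⟩
    intro v
    obtain ⟨u, hu⟩ := hG v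
    rw [hw222]
    calc (2 : ℕ) = if G.Adj v u then ((2 : Fin 3) : ℕ) else 0 := by simp [hu]
    _ ≤ ∑ u', if G.Adj v u' then ((2 : Fin 3) : ℕ) else 0 :=
        Finset.single_le_sum (f := fun u' => if G.Adj v u' then ((2 : Fin 3) : ℕ) else 0)
          (fun _ _ => Nat.zero_le _) (mem_univ u)
  obtain ⟨f, hf, hfs⟩ := Nat.sInf_mem hWne
  have hfs' : ∑ v, (f v : ℕ) = gammaW G ![2,2,2] := hfs
  refine ⟨⟨?_, ?_⟩, ?_⟩
  · -- lower bound
    have key : 2 * Fintype.card V ≤ G.maxDegree * gammaW G ![2,2,2] := by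
      calc 2 * Fintype.card V = ∑ _v : V, 2 := by simp [mul_comm]
      _ ≤ ∑ v : V, ∑ u, (if G.Adj v u then (f u : ℕ) else 0) := by
          apply Finset.sum_le_sum
          intro v _
          have := hf v
          rwa [hw222] at this
      _ = ∑ u : V, ∑ v, (if G.Adj v u then (f u : ℕ) else 0) := Finset.sum_comm
      _ = ∑ u : V, (univ.filter (fun v => G.Adj v u)).card * (f u : ℕ) := by
          refine Finset.sum_congr rfl fun u _ => ?_
          rw [← Finset.sum_filter, Finset.sum_const, smul_eq_mul]
      _ ≤ ∑ u : V, G.maxDegree * (f u : ℕ) := by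
          apply Finset.sum_le_sum
          intro u _
          apply Nat.mul_le_mul_right
          rw [filter_adj_card]
          exact G.degree_le_maxDegree u
      _ = G.maxDegree * gammaW G ![2,2,2] := by rw [← Finset.mul_sum, hfs']
    rcases Nat.eq_zero_or_pos G.maxDegree with hΔ | hΔ
    · rcases isEmpty_or_nonempty V with hV | hV
      · simp
      · exfalso
        obtain ⟨v⟩ := hV
        obtain ⟨u, hu⟩ := hG v
        have h1 : 0 < G.degree v := by
          rw [← card_neighborFinset_eq_degree, Finset.card_pos]
          exact ⟨u, (G.mem_neighborFinset v u).2 hu⟩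
        have h2 := G.degree_le_maxDegree v
        rw [hΔ, Nat.le_zero] at h2
        exact h1.ne' h2
    · rw [Int.ceil_le]
      have hΔQ : (0 : ℚ) < (G.maxDegree : ℚ) := by exact_mod_cast hΔ
      rw [div_le_iff₀ hΔQ]
      push_cast
      calc (2 : ℚ) * Fintype.card V ≤ (G.maxDegree : ℚ) * gammaW G ![2,2,2] := by
            exact_mod_cast key
      _ = (gammaW G ![2,2,2] : ℚ) * G.maxDegree := by ring
  · -- upper bound 2 γ_t
    have hTne : {n | ∃ S : Finset V, (∀ v, ∃ u ∈ S, G.Adj u v) ∧ S.card = n}.Nonempty := by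
      refine ⟨(univ : Finset V).card, univ, fun v => ?_, rfl⟩
      obtain ⟨u, hu⟩ := hG v
      exact ⟨u, mem_univ u, hu.symm⟩
    obtain ⟨S, hS, hScard⟩ := Nat.sInf_mem hTne
    set g : V → Fin 3 := fun v => if v ∈ S then 2 else 0 with hg
    have hgW : WDom G ![2,2,2] g := by
      intro v
      obtain ⟨u, huS, huv⟩ := hS v
      rw [hw222]
      calc (2 : ℕ) = if G.Adj v u then (g u : ℕ) else 0 := by
            simp [hg, huv.symm, huS]
      _ ≤ ∑ u', if G.Adj v u' then (g u' : ℕ) else 0 :=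
          Finset.single_le_sum (f := fun u' => if G.Adj v u' then (g u' : ℕ) else 0)
            (fun _ _ => Nat.zero_le _) (mem_univ u)
    have hsum : ∑ v, (g v : ℕ) = 2 * S.card := by
      calc ∑ v, (g v : ℕ) = ∑ v, (if v ∈ S then 2 else 0) :=
            Finset.sum_congr rfl (fun v _ => by by_cases h : v ∈ S <;> simp [hg, h])
      _ = 2 * S.card := by
          rw [Finset.sum_ite_mem, Finset.univ_inter, Finset.sum_const, smul_eq_mul, mul_comm]
    have hle : gammaW G ![2,2,2] ≤ ∑ v, (g v : ℕ) :=
      Nat.sInf_le ⟨g, hgW, rfl⟩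
    rw [hsum, hScard] at hle
    exact hle
  · -- double total domination bound
    intro hδ
    have hX2ne : {n | ∃ S : Finset V, (∀ v, 2 ≤ (S.filter (fun u => G.Adj u v)).card) ∧
        S.card = n}.Nonempty := by
      refine ⟨(univ : Finset V).card, univ, fun v => ?_, rfl⟩
      rw [filter_adj_card]
      exact le_trans hδ (G.minDegree_le_degree v)
    obtain ⟨S, hS, hScard⟩ := Nat.sInf_mem hX2ne
    set g : V → Fin 3 := fun v => if v ∈ S then 1 else 0 with hg
    have hgW : WDom G ![2,2,2] g := by
      intro v
      rw [hw222]
      have h2 := hS v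
      calc (2 : ℕ) ≤ (S.filter (fun u => G.Adj u v)).card := h2
      _ = ∑ u ∈ S.filter (fun u => G.Adj u v), (if G.Adj v u then (g u : ℕ) else 0) := by
          rw [Finset.card_eq_sum_ones]
          refine Finset.sum_congr rfl fun u hu => ?_
          rw [Finset.mem_filter] at hu
          simp [hg, hu.1, hu.2.symm]
      _ ≤ ∑ u, (if G.Adj v u then (g u : ℕ) else 0) :=
          Finset.sum_le_sum_of_subset_of_nonneg (Finset.subset_univ _)
            (fun _ _ _ => Nat.zero_le _)
    have hsum : ∑ v, (g v : ℕ) = S.card := by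
      calc ∑ v, (g v : ℕ) = ∑ v, (if v ∈ S then 1 else 0) :=
            Finset.sum_congr rfl (fun v _ => by by_cases h : v ∈ S <;> simp [hg, h])
      _ = S.card := by
          rw [Finset.sum_ite_mem, Finset.univ_inter, Finset.sum_const, smul_eq_mul, mul_one]
    have hle : gammaW G ![2,2,2] ≤ ∑ v, (g v : ℕ) :=
      Nat.sInf_le ⟨g, hgW, rfl⟩
    rw [hsum, hScard] at hle
    exact hle
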